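/- Let M be a matroid of rank k, S an independent set in M extended to a basis S′, and S* another basis. Let π : S* → S′ be a Brualdi bijection. If a is drawn from S* with each element having probability at most 1/k of being chosen, then each fixed element e ∈ S has probability at most 1/k of equaling π(a); consequently, for any nonnegative monotone submodular f, E[f(S \ {π(a)})] ≥ (1 − 1/k) f(S). -/

import Mathlib

lemma sum_marginals_le {U : Type*} [DecidableEq U] (f : Finset U → ℝ)
    (hsub : ∀ A B : Finset U, A ⊆ B → ∀ x ∉ B,
      f (insert x A) - f A ≥ f (insert x B) - f B) :
    ∀ S : Finset U, ∑ e ∈ S, (f S - f (S.erase e)) ≤ f S - f ∅ := by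
  intro S
  induction S using Finset.induction_on with
  | empty => simp
  | @insert x T hx ih =>
    rw [Finset.sum_insert hx, Finset.erase_insert hx]
    have hterm : ∀ e ∈ T, f (insert x T) - f ((insert x T).erase e)
        ≤ f T - f (T.erase e) := by
      intro e he
      have hne : e ≠ x := fun h => hx (h ▸ he)
      have key := hsub (T.erase e) ((insert x T).erase e)
        (Finset.erase_subset_erase e (Finset.subset_insert x T)) e
        (Finset.notMem_erase e _)
      rw [Finset.insert_erase he,
        Finset.insert_erase (Finset.mem_insert_of_mem he)] at key
      linarith
    have hsum := Finset.sum_le_sum hterm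
    linarith

theorem brualdi_removal_bound {U : Type*} [Fintype U] [DecidableEq U]
    {Ω : Type*} [Fintype Ω]
    (M : Matroid U) (k : ℕ) (hk : 0 < k)
    (S S' Sstar : Finset U)
    (hS : M.Indep (S : Set U)) (hS' : M.IsBase (S' : Set U)) (hSS' : S ⊆ S')
    (hSstar : M.IsBase (Sstar : Set U)) (hcard : Sstar.card = k)
    (π : U → U) (hπ : Set.BijOn π (Sstar : Set U) (S' : Set U))
    (hbru : ∀ x ∈ Sstar, M.Indep (insert x ((S' : Set U) \ {π x})))
    (f : Finset U → ℝ)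
    (hnonneg : ∀ A, 0 ≤ f A)
    (hmono : ∀ A B : Finset U, A ⊆ B → f A ≤ f B)
    (hsub : ∀ A B : Finset U, A ⊆ B → ∀ x ∉ B,
      f (insert x A) - f A ≥ f (insert x B) - f B)
    (w : Ω → ℝ) (hw : ∀ ω, 0 ≤ w ω) (hw1 : ∑ ω, w ω = 1)
    (a : Ω → U) (ha : ∀ ω, a ω ∈ Sstar)
    (hunif : ∀ x ∈ Sstar, (∑ ω, if a ω = x then w ω else 0) ≤ 1/(k : ℝ)) :
    (∀ e ∈ S, (∑ ω, if π (a ω) = e then w ω else 0) ≤ 1/(k : ℝ))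
    ∧ (∑ ω, w ω * f (S.erase (π (a ω)))) ≥ (1 - 1/(k : ℝ)) * f S := by
  have h1 : ∀ e ∈ S, (∑ ω, if π (a ω) = e then w ω else 0) ≤ 1/(k : ℝ) := by
    intro e he
    have heS' : (e : U) ∈ (S' : Set U) := hSS' he
    obtain ⟨x, hx, rfl⟩ := hπ.surjOn heS'
    have hx' : x ∈ Sstar := hx
    calc (∑ ω, if π (a ω) = π x then w ω else 0)
        = ∑ ω, if a ω = x then w ω else 0 := by
          refine Finset.sum_congr rfl fun ω _ => ?_
          refine if_congr ⟨fun h => hπ.injOn (ha ω) hx h, fun h => by rw [h]⟩ rfl rfl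
      _ ≤ 1/(k : ℝ) := hunif x hx'
  refine ⟨h1, ?_⟩
  -- expected loss
  have hloss : ∀ ω, w ω * (f S - f (S.erase (π (a ω))))
      = ∑ e ∈ S, (if π (a ω) = e then w ω * (f S - f (S.erase e)) else 0) := by
    intro ω
    rw [Finset.sum_ite_eq]
    by_cases h : π (a ω) ∈ S
    · simp [h]
    · simp [h, Finset.erase_eq_of_notMem h]
  have hlossbound : ∑ ω, w ω * (f S - f (S.erase (π (a ω)))) ≤ (1/(k : ℝ)) * f S := by
    calc ∑ ω, w ω * (f S - f (S.erase (π (a ω))))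
        = ∑ ω, ∑ e ∈ S, (if π (a ω) = e then w ω * (f S - f (S.erase e)) else 0) :=
          Finset.sum_congr rfl fun ω _ => hloss ω
      _ = ∑ e ∈ S, ∑ ω, (if π (a ω) = e then w ω * (f S - f (S.erase e)) else 0) :=
          Finset.sum_comm
      _ = ∑ e ∈ S, (∑ ω, if π (a ω) = e then w ω else 0) * (f S - f (S.erase e)) := by
          refine Finset.sum_congr rfl fun e _ => ?_
          rw [Finset.sum_mul]
          refine Finset.sum_congr rfl fun ω _ => ?_
          by_cases h : π (a ω) = e <;> simp [h]
      _ ≤ ∑ e ∈ S, (1/(k : ℝ)) * (f S - f (S.erase e)) := by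
          refine Finset.sum_le_sum fun e he => ?_
          have hm : 0 ≤ f S - f (S.erase e) := by
            have := hmono (S.erase e) S (Finset.erase_subset e S)
            linarith
          exact mul_le_mul_of_nonneg_right (h1 e he) hm
      _ = (1/(k : ℝ)) * ∑ e ∈ S, (f S - f (S.erase e)) := by rw [Finset.mul_sum]
      _ ≤ (1/(k : ℝ)) * (f S - f ∅) := by
          have hkpos : (0:ℝ) < 1/(k : ℝ) := by positivity
          exact mul_le_mul_of_nonneg_left (sum_marginals_le f hsub S) (le_of_lt hkpos)
      _ ≤ (1/(k : ℝ)) * f S := by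
          have := hnonneg (∅ : Finset U)
          have hkpos : (0:ℝ) ≤ 1/(k : ℝ) := by positivity
          nlinarith
  have hexp : ∑ ω, w ω * f (S.erase (π (a ω)))
      = f S - ∑ ω, w ω * (f S - f (S.erase (π (a ω)))) := by
    have : ∑ ω, w ω * (f S - f (S.erase (π (a ω))))
        = (∑ ω, w ω * f S) - ∑ ω, w ω * f (S.erase (π (a ω))) := by
      rw [← Finset.sum_sub_distrib]
      exact Finset.sum_congr rfl fun ω _ => by ring
    rw [this, ← Finset.sum_mul, hw1, one_mul]
    ring
  rw [ge_iff_le, hexp]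
  linarith
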